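/- arXiv:2602.08464 — 2 statements merged into one kernel-verified Lean document; each statement's English description precedes it below -/
import Mathlib

section
/- Pauli twirling diagonalizes a channel written in the Pauli basis: let q : V × V → ℂ and let E be the linear map on 2^n×2^n complex matrices E(ρ) = Σ_{b,c ∈ V} q(b,c) · P_b ρ P_c. Define the Pauli twirl E^P(ρ) = 4^{-n} Σ_{a ∈ V} P_a · E(P_a ρ P_a) · P_a. Then for every matrix ρ, E^P(ρ) = Σ_{b ∈ V} q(b,b) · P_b ρ P_b, i.e. the twirled map is the Pauli channel with coefficients given by the diagonal of q. -/
/-- Index set of `n`-qubit Pauli words. -/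
abbrev V (n : ℕ) : Type := (Fin n → ZMod 2) × (Fin n → ZMod 2)

/-- Symplectic inner product `⟨a,b⟩ = Σᵢ (aₓᵢ·b_zᵢ + a_zᵢ·bₓᵢ) ∈ ZMod 2`. -/
def sform {n : ℕ} (a b : V n) : ZMod 2 := ∑ i, (a.1 i * b.2 i + a.2 i * b.1 i)

/-- The sign `χ(a,b) = (−1)^⟨a,b⟩ ∈ ℝ`. -/
noncomputable def chi {n : ℕ} (a b : V n) : ℝ := (-1 : ℝ) ^ (sform a b).val

/-- Integer (real-valued) lift `⟨a,b⟩_ℤ ∈ {0,1} ⊂ ℝ`. -/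
noncomputable def sformZ {n : ℕ} (a b : V n) : ℝ := ((sform a b).val : ℝ)

/-- The single-qubit Pauli factor `i^(aₓ·a_z) · X^(aₓ) · Z^(a_z)`. -/
noncomputable def pauli1 (ax az : ZMod 2) : Matrix (Fin 2) (Fin 2) ℂ :=
  (Complex.I ^ (ax.val * az.val)) •
    ((!![0, 1; 1, 0] : Matrix (Fin 2) (Fin 2) ℂ) ^ ax.val *
     (!![1, 0; 0, -1] : Matrix (Fin 2) (Fin 2) ℂ) ^ az.val)

/-- The space of `2^n × 2^n` complex matrices (indexed by `Fin n → Fin 2`). -/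
abbrev Mq (n : ℕ) : Type := Matrix (Fin n → Fin 2) (Fin n → Fin 2) ℂ

/-- The `n`-qubit Pauli word `P_a`, the Kronecker product over `i ∈ Fin n`
of `i^(aₓᵢ·a_zᵢ)·X^(aₓᵢ)·Z^(a_zᵢ)`. -/
noncomputable def P {n : ℕ} (a : V n) : Mq n :=
  Matrix.of fun x y => ∏ i, pauli1 (a.1 i) (a.2 i) (x i) (y i)

-- auxiliary lemmas
lemma v1 : ZMod.val (1 : ZMod 2) = 1 := rfl
lemma v0 : ZMod.val (0 : ZMod 2) = 0 := rfl
lemma v11 : ZMod.val (1 + 1 : ZMod 2) = 0 := rfl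

lemma pauli1_mul_self (ax az : ZMod 2) : pauli1 ax az * pauli1 ax az = 1 := by
  fin_cases ax <;> fin_cases az <;>
    · ext i j
      fin_cases i <;> fin_cases j <;>
        simp [pauli1, Matrix.mul_apply, Fin.sum_univ_two, Matrix.one_apply, v1, v0, v11,
          pow_succ, Complex.I_sq, ZMod.val]

lemma zmod2_val_aux (a b c d : ZMod 2) :
    (a * b + c * d).val = (a.val * b.val + c.val * d.val) % 2 := by
  fin_cases a <;> fin_cases b <;> fin_cases c <;> fin_cases d <;> rfl

lemma pauli1_comm (ax az bx bz : ZMod 2) :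
    pauli1 ax az * pauli1 bx bz
      = ((-1 : ℂ) ^ (ax * bz + az * bx).val) • (pauli1 bx bz * pauli1 ax az) := by
  rw [zmod2_val_aux]
  fin_cases ax <;> fin_cases az <;> fin_cases bx <;> fin_cases bz <;>
    · ext i j
      fin_cases i <;> fin_cases j <;>
        simp [pauli1, Matrix.mul_apply, Fin.sum_univ_two, v1, v0, v11, pow_succ, Complex.I_sq, ZMod.val]

noncomputable def sgn (x : ZMod 2) : ℂ := (-1 : ℂ) ^ x.val

lemma sgn_add (x y : ZMod 2) : sgn (x + y) = sgn x * sgn y := by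
  simp only [sgn, ZMod.val_add]
  fin_cases x <;> fin_cases y <;> simp [sgn, v1, v0, v11, ZMod.val]

lemma sgn_zero : sgn 0 = 1 := by simp [sgn, v0]

lemma sgn_sum {ι : Type*} (s : Finset ι) (v : ι → ZMod 2) :
    ∏ i ∈ s, sgn (v i) = sgn (∑ i ∈ s, v i) := by
  induction s using Finset.cons_induction with
  | empty => simp [sgn_zero]
  | cons a s ha ih => rw [Finset.prod_cons, Finset.sum_cons, sgn_add, ih]

noncomputable def kron {n : ℕ} (A : Fin n → Matrix (Fin 2) (Fin 2) ℂ) : Mq n :=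
  Matrix.of fun x y => ∏ i, A i (x i) (y i)

lemma kron_mul {n : ℕ} (A B : Fin n → Matrix (Fin 2) (Fin 2) ℂ) :
    kron A * kron B = kron (fun i => A i * B i) := by
  ext x y
  simp only [kron, Matrix.mul_apply, Matrix.of_apply]
  rw [Fintype.prod_sum (fun i j => A i (x i) j * B i j (y i))]
  exact Finset.sum_congr rfl fun z _ => (Finset.prod_mul_distrib).symm

lemma kron_one {n : ℕ} : kron (fun _ : Fin n => (1 : Matrix (Fin 2) (Fin 2) ℂ)) = 1 := by
  ext x y
  simp only [kron, Matrix.of_apply, Matrix.one_apply]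
  rw [Finset.prod_boole]
  simp [funext_iff]

lemma kron_smul {n : ℕ} (c : Fin n → ℂ) (A : Fin n → Matrix (Fin 2) (Fin 2) ℂ) :
    kron (fun i => c i • A i) = (∏ i, c i) • kron A := by
  ext x y
  simp [kron, Finset.prod_mul_distrib]

lemma P_eq {n : ℕ} (a : V n) : P a = kron (fun i => pauli1 (a.1 i) (a.2 i)) := rfl

lemma P_mul_self {n : ℕ} (a : V n) : P a * P a = 1 := by
  rw [P_eq, kron_mul]
  simp only [pauli1_mul_self]
  exact kron_one

lemma P_conj {n : ℕ} (a b : V n) : P a * P b * P a = sgn (sform a b) • P b := by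
  rw [P_eq a, P_eq b, kron_mul, kron_mul]
  have h : ∀ i : Fin n,
      pauli1 (a.1 i) (a.2 i) * pauli1 (b.1 i) (b.2 i) * pauli1 (a.1 i) (a.2 i)
        = sgn (a.1 i * b.2 i + a.2 i * b.1 i) • pauli1 (b.1 i) (b.2 i) := by
    intro i
    rw [pauli1_comm, Matrix.smul_mul, mul_assoc, pauli1_mul_self, mul_one]
    rfl
  calc kron (fun i => pauli1 (a.1 i) (a.2 i) * pauli1 (b.1 i) (b.2 i) * pauli1 (a.1 i) (a.2 i))
      = kron (fun i => sgn (a.1 i * b.2 i + a.2 i * b.1 i) • pauli1 (b.1 i) (b.2 i)) := by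
        simp only [h]
    _ = (∏ i, sgn (a.1 i * b.2 i + a.2 i * b.1 i)) • kron (fun i => pauli1 (b.1 i) (b.2 i)) :=
        kron_smul _ _
    _ = sgn (sform a b) • P b := by rw [sgn_sum, sform, P_eq]

lemma zmod2_ne_zero {x : ZMod 2} (h : x ≠ 0) : x = 1 := by revert h; revert x; decide

lemma sform_add_left {n : ℕ} (a e d : V n) : sform (a + e) d = sform a d + sform e d := by
  simp only [sform, Prod.fst_add, Prod.snd_add, Pi.add_apply, ← Finset.sum_add_distrib]
  exact Finset.sum_congr rfl fun i _ => by ring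

lemma sform_add_right {n : ℕ} (a b c : V n) : sform a (b + c) = sform a b + sform a c := by
  simp only [sform, Prod.fst_add, Prod.snd_add, Pi.add_apply, ← Finset.sum_add_distrib]
  exact Finset.sum_congr rfl fun i _ => by ring

lemma sum_sgn_eq_zero {n : ℕ} (d : V n) (hd : d ≠ 0) :
    ∑ a : V n, sgn (sform a d) = 0 := by
  -- find e with sform e d = 1
  obtain ⟨e, he⟩ : ∃ e : V n, sform e d = 1 := by
    rcases (by
      by_contra h
      push_neg at h
      exact hd (Prod.ext h.1 h.2) : d.1 ≠ 0 ∨ d.2 ≠ 0) with h | h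
    · obtain ⟨i0, hi0⟩ := Function.ne_iff.mp h
      refine ⟨(0, Pi.single i0 1), ?_⟩
      simp only [sform]
      rw [Finset.sum_eq_single i0]
      · simp [Pi.single_eq_same, zmod2_ne_zero hi0]
      · intro i _ hne; simp [Pi.single_eq_of_ne hne]
      · simp
    · obtain ⟨i0, hi0⟩ := Function.ne_iff.mp h
      refine ⟨(Pi.single i0 1, 0), ?_⟩
      simp only [sform]
      rw [Finset.sum_eq_single i0]
      · simp [Pi.single_eq_same, zmod2_ne_zero hi0]
      · intro i _ hne; simp [Pi.single_eq_of_ne hne]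
      · simp
  have hbij : Function.Bijective (fun a : V n => a + e) :=
    (Equiv.addRight e).bijective
  have h1 : ∑ a : V n, sgn (sform a d) = ∑ a : V n, sgn (sform (a + e) d) :=
    (Fintype.sum_bijective _ hbij _ _ fun a => rfl).symm
  have h2 : ∀ a : V n, sgn (sform (a + e) d) = - sgn (sform a d) := by
    intro a
    rw [sform_add_left, he, sgn_add]
    simp [sgn, v1]
  simp only [h2] at h1
  rw [Finset.sum_neg_distrib] at h1
  linear_combination h1 / 2

lemma neg_zmod2 {n : ℕ} (c : V n) : c + c = 0 := by
  have h : ∀ x : ZMod 2, x + x = 0 := by decide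
  exact Prod.ext (funext fun i => h _) (funext fun i => h _)

lemma add_eq_zero_iff_V {n : ℕ} (b c : V n) : b + c = 0 ↔ b = c := by
  constructor
  · intro h
    have := congrArg (· + c) h
    simpa [add_assoc, neg_zmod2 c] using this
  · rintro rfl; exact neg_zmod2 b

lemma sform_self_zero {n : ℕ} (a : V n) : sform a 0 = 0 := by
  simp [sform]

lemma sum_sgn {n : ℕ} (d : V n) :
    ∑ a : V n, sgn (sform a d) = if d = 0 then (4 : ℂ) ^ n else 0 := by
  by_cases hd : d = 0
  · subst hd
    simp only [sform_self_zero, sgn_zero, if_pos rfl, Finset.sum_const, nsmul_eq_mul, mul_one]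
    have : Fintype.card (V n) = 2 ^ n * 2 ^ n := by
      simp [Fintype.card_prod, Fintype.card_fun]
    rw [Finset.card_univ, this]
    push_cast
    rw [← mul_pow]
    norm_num
  · rw [if_neg hd]
    exact sum_sgn_eq_zero d hd

theorem pauli_twirl_diagonalizes (n : ℕ) (hn : 1 ≤ n) (q : V n × V n → ℂ)
    (E : Mq n → Mq n)
    (hE : ∀ ρ : Mq n, E ρ = ∑ b : V n, ∑ c : V n, q (b, c) • (P b * ρ * P c))
    (ρ : Mq n) :
    ((4 : ℂ) ^ n)⁻¹ • (∑ a : V n, P a * E (P a * ρ * P a) * P a)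
      = ∑ b : V n, q (b, b) • (P b * ρ * P b) := by
  have key : ∀ a b c : V n, P a * (q (b, c) • (P b * (P a * ρ * P a) * P c)) * P a
      = (q (b, c) * sgn (sform a (b + c))) • (P b * ρ * P c) := by
    intro a b c
    have h1 : P a * (P b * (P a * ρ * P a) * P c) * P a
        = (P a * P b * P a) * ρ * (P a * P c * P a) := by noncomm_ring
    rw [Matrix.mul_smul, Matrix.smul_mul, h1, P_conj, P_conj,
      Matrix.smul_mul, Matrix.smul_mul, Matrix.mul_smul, smul_smul, smul_smul]
    congr 1
    rw [sform_add_right, sgn_add]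
    ring
  have step : ∀ a : V n, P a * E (P a * ρ * P a) * P a
      = ∑ b : V n, ∑ c : V n, (q (b, c) * sgn (sform a (b + c))) • (P b * ρ * P c) := by
    intro a
    rw [hE, Matrix.mul_sum, Matrix.sum_mul]
    refine Finset.sum_congr rfl fun b _ => ?_
    rw [Matrix.mul_sum, Matrix.sum_mul]
    exact Finset.sum_congr rfl fun c _ => key a b c
  simp only [step]
  have swap : ∑ a : V n, ∑ b : V n, ∑ c : V n,
        (q (b, c) * sgn (sform a (b + c))) • (P b * ρ * P c)
      = ∑ b : V n, ∑ c : V n,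
        ((∑ a : V n, sgn (sform a (b + c))) * q (b, c)) • (P b * ρ * P c) := by
    rw [Finset.sum_comm]
    refine Finset.sum_congr rfl fun b _ => ?_
    rw [Finset.sum_comm]
    refine Finset.sum_congr rfl fun c _ => ?_
    rw [← Finset.sum_smul]
    congr 1
    rw [← Finset.mul_sum, mul_comm]
  rw [swap]
  have collapse : ∀ b : V n,
      ∑ c : V n, ((∑ a : V n, sgn (sform a (b + c))) * q (b, c)) • (P b * ρ * P c)
        = ((4 : ℂ) ^ n * q (b, b)) • (P b * ρ * P b) := by
    intro b
    rw [Finset.sum_eq_single b]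
    · rw [sum_sgn, if_pos (neg_zmod2 b)]
    · intro c _ hcb
      rw [sum_sgn, if_neg, zero_mul, zero_smul]
      exact fun h => hcb ((add_eq_zero_iff_V b c).mp h).symm
    · intro h; exact absurd (Finset.mem_univ b) h
  simp only [collapse]
  rw [Finset.smul_sum]
  refine Finset.sum_congr rfl fun b _ => ?_
  rw [smul_smul, ← mul_assoc, inv_mul_cancel₀ (pow_ne_zero n (by norm_num : (4:ℂ) ≠ 0)), one_mul]
end

section
/- Hadamard dephasing with relaxation: let γ_φ ≥ 0, γ ≥ 0, t ≥ 0. Let L_φ = (X + Z)/√2, let R = !![cos(π/8), −sin(π/8); sin(π/8), cos(π/8)] (the rotation R_y(π/4)), let L = R·σ₋·Rᵀ, and let D be the linear map on 2×2 complex matrices D(ρ) = γ_φ·(L_φ ρ L_φ − ρ) + γ·(L ρ L† − ½(L†L·ρ + ρ·L†L)). Then the Pauli eigenvalues of exp(t·D) satisfy f_x = f_z = ½(exp(−(γ/2 + 2γ_φ)t) + exp(−γt)) and f_y = exp(−(γ/2 + 2γ_φ)t), and the Pauli-Lindblad parameters of the Pauli-twirled channel satisfy λ_x = λ_z = γ_φ·t/2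 + γ·t/8 and λ_y = γ·t/4 − ½·Real.log(Real.cosh(γ_φ·t − γ·t/4)). -/
attribute [local instance] Matrix.linftyOpNormedAddCommGroup Matrix.linftyOpNormedRing
  Matrix.linftyOpNormedAlgebra

/-- The space of 2×2 complex matrices. -/
abbrev M2 : Type := Matrix (Fin 2) (Fin 2) ℂ

def Xm : M2 := !![0, 1; 1, 0]
def Ym : M2 := !![0, -Complex.I; Complex.I, 0]
def Zm : M2 := !![1, 0; 0, -1]

/-- The Hadamard jump operator `L_φ = (X + Z)/√2`. -/
noncomputable def Lφ : M2 := ((Real.sqrt 2 : ℝ) : ℂ)⁻¹ • (Xm + Zm)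

/-- The lowering operator `σ₋`. -/
def σm : M2 := !![0, 1; 0, 0]

/-- The rotation `R_y(π/4)`. -/
noncomputable def Rrot : M2 :=
  !![((Real.cos (Real.pi / 8) : ℝ) : ℂ), -((Real.sin (Real.pi / 8) : ℝ) : ℂ);
     ((Real.sin (Real.pi / 8) : ℝ) : ℂ), ((Real.cos (Real.pi / 8) : ℝ) : ℂ)]

/-- The tilted relaxation jump operator `L = R·σ₋·Rᵀ`. -/
noncomputable def Lt : M2 := Rrot * σm * Rrot.transpose

/-- The algebra of linear maps on `M2` is a topological ring (instance found automatically in the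
older library). -/
instance instIsTopologicalRingM2End : IsTopologicalRing (M2 →L[ℂ] M2) :=
  @NonUnitalSeminormedRing.toIsTopologicalRing _
    (@ContinuousLinearMap.toNormedRing ℂ M2 _ _ _).toSeminormedRing.toNonUnitalSeminormedRing


noncomputable def rC : ℂ := ((Real.sqrt 2 : ℝ) : ℂ)

lemma hr2 : rC ^ 2 = 2 := by
  rw [rC]
  norm_cast
  rw [Real.sq_sqrt] <;> norm_num

lemma Lt_eq : Lt = !![-(rC/4), 1/2 + rC/4; -(1/2) + rC/4, rC/4] := by
  have hpyth := Real.sin_sq_add_cos_sq (Real.pi/8)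
  have hsin2 := Real.sin_two_mul (Real.pi/8)
  have hcos2 := Real.cos_two_mul (Real.pi/8)
  rw [show 2*(Real.pi/8) = Real.pi/4 by ring, Real.sin_pi_div_four] at hsin2
  rw [show 2*(Real.pi/8) = Real.pi/4 by ring, Real.cos_pi_div_four] at hcos2
  obtain ⟨c, s, hc, hs⟩ : ∃ c s, Real.cos (Real.pi/8) = c ∧ Real.sin (Real.pi/8) = s :=
    ⟨_, _, rfl, rfl⟩
  rw [hc] at hpyth hsin2 hcos2
  rw [hs] at hpyth hsin2
  have hpythC : ((s:ℂ))^2 + (c:ℂ)^2 = 1 := by exact_mod_cast hpyth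
  have hsin2C : ((Real.sqrt 2 : ℝ):ℂ)/2 = 2 * (s:ℂ) * (c:ℂ) := by exact_mod_cast hsin2
  have hcos2C : ((Real.sqrt 2 : ℝ):ℂ)/2 = 2 * (c:ℂ)^2 - 1 := by exact_mod_cast hcos2
  rw [Lt, Rrot, σm, rC]
  simp only [hc, hs]
  ext i j
  fin_cases i <;> fin_cases j
  · simp [Matrix.mul_apply, Fin.sum_univ_two, Matrix.transpose_apply, Matrix.vecHead, Matrix.vecTail]
    linear_combination -hsin2C/2
  · simp [Matrix.mul_apply, Fin.sum_univ_two, Matrix.transpose_apply, Matrix.vecHead, Matrix.vecTail]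
    linear_combination (-1/2) * hcos2C
  · simp [Matrix.mul_apply, Fin.sum_univ_two, Matrix.transpose_apply, Matrix.vecHead, Matrix.vecTail]
    linear_combination (-1) * hpythC + (-1/2) * hcos2C
  · simp [Matrix.mul_apply, Fin.sum_univ_two, Matrix.transpose_apply, Matrix.vecHead, Matrix.vecTail]
    linear_combination (-1/2) * hsin2C

lemma Ltd_eq : Lt.conjTranspose = !![-(rC/4), -(1/2) + rC/4; 1/2 + rC/4, rC/4] := by
  rw [Lt_eq]
  ext i j
  fin_cases i <;> fin_cases j <;>
    simp [Matrix.conjTranspose_apply, rC]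

/-- `P = X + Z`. -/
noncomputable def Pm : M2 := !![1, 1; 1, -1]
/-- `Q = X - Z`. -/
noncomputable def Qm : M2 := !![-1, 1; 1, 1]

lemma hXPQ : Xm = (1/2 : ℂ) • (Pm + Qm) := by
  ext i j; fin_cases i <;> fin_cases j <;> simp [Xm, Pm, Qm] <;> norm_num

lemma hZPQ : Zm = (1/2 : ℂ) • (Pm - Qm) := by
  ext i j; fin_cases i <;> fin_cases j <;> simp [Zm, Pm, Qm] <;> norm_num

lemma hXZP : Xm + Zm = Pm := by
  ext i j; fin_cases i <;> fin_cases j <;> simp [Xm, Zm, Pm]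

lemma Lφ_conj (V : M2) : Lφ * V * Lφ = (1/2 : ℂ) • (Pm * V * Pm) := by
  rw [Lφ, hXZP, Matrix.smul_mul, Matrix.smul_mul, Matrix.mul_smul, smul_smul]
  congr 1
  rw [← mul_inv]
  norm_cast
  rw [Real.mul_self_sqrt] <;> norm_num

lemma hφP : Lφ * Pm * Lφ = Pm := by
  rw [Lφ_conj]
  ext i j; fin_cases i <;> fin_cases j <;>
    simp [Pm, Matrix.mul_apply, Fin.sum_univ_two] <;> norm_num

lemma hφQ : Lφ * Qm * Lφ = -Qm := by
  rw [Lφ_conj]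
  ext i j; fin_cases i <;> fin_cases j <;>
    simp [Pm, Qm, Matrix.mul_apply, Fin.sum_univ_two] <;> norm_num

lemma hφY : Lφ * Ym * Lφ = -Ym := by
  rw [Lφ_conj]
  ext i j; fin_cases i <;> fin_cases j <;>
    simp [Pm, Ym, Matrix.mul_apply, Fin.sum_univ_two] <;> ring

lemma brP : Lt * Pm * Lt.conjTranspose
    - (1/2 : ℂ) • (Lt.conjTranspose * Lt * Pm + Pm * (Lt.conjTranspose * Lt)) = -Pm := by
  rw [Ltd_eq, Lt_eq]
  ext i j
  fin_cases i <;> fin_cases j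
  · simp [Pm, Matrix.mul_apply, Fin.sum_univ_two]
    linear_combination (-1/4) * hr2
  · simp [Pm, Matrix.mul_apply, Fin.sum_univ_two]
    linear_combination (-1/4) * hr2
  · simp [Pm, Matrix.mul_apply, Fin.sum_univ_two]
    linear_combination (-1/4) * hr2
  · simp [Pm, Matrix.mul_apply, Fin.sum_univ_two]
    linear_combination (1/4) * hr2

lemma brQ : Lt * Qm * Lt.conjTranspose
    - (1/2 : ℂ) • (Lt.conjTranspose * Lt * Qm + Qm * (Lt.conjTranspose * Lt))
    = (-(1/2) : ℂ) • Qm := by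
  rw [Ltd_eq, Lt_eq]
  ext i j
  fin_cases i <;> fin_cases j <;>
  · simp [Qm, Matrix.mul_apply, Fin.sum_univ_two]
    ring

lemma brY : Lt * Ym * Lt.conjTranspose
    - (1/2 : ℂ) • (Lt.conjTranspose * Lt * Ym + Ym * (Lt.conjTranspose * Lt))
    = (-(1/2) : ℂ) • Ym := by
  rw [Ltd_eq, Lt_eq]
  ext i j
  fin_cases i <;> fin_cases j
  · simp [Ym, Matrix.mul_apply, Fin.sum_univ_two]
    ring
  · simp [Ym, Matrix.mul_apply, Fin.sum_univ_two]
    linear_combination (Complex.I/4) * hr2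
  · simp [Ym, Matrix.mul_apply, Fin.sum_univ_two]
    linear_combination (-Complex.I/4) * hr2
  · simp [Ym, Matrix.mul_apply, Fin.sum_univ_two]
    ring

lemma trXP : Matrix.trace (Xm * Pm) = 2 := by
  simp [Xm, Pm, Matrix.trace_fin_two, Matrix.mul_apply, Fin.sum_univ_two]
  norm_num

lemma trXQ : Matrix.trace (Xm * Qm) = 2 := by
  simp [Xm, Qm, Matrix.trace_fin_two, Matrix.mul_apply, Fin.sum_univ_two]
  norm_num

lemma trZP : Matrix.trace (Zm * Pm) = 2 := by
  simp [Zm, Pm, Matrix.trace_fin_two, Matrix.mul_apply, Fin.sum_univ_two]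
  norm_num

lemma trZQ : Matrix.trace (Zm * Qm) = -2 := by
  simp [Zm, Qm, Matrix.trace_fin_two, Matrix.mul_apply, Fin.sum_univ_two]
  norm_num

lemma trYY : Matrix.trace (Ym * Ym) = 2 := by
  simp [Ym, Matrix.trace_fin_two, Matrix.mul_apply, Fin.sum_univ_two, Complex.I_mul_I]
  norm_num

lemma exp_apply_eigen (A : M2 →L[ℂ] M2) (v : M2) (c : ℂ) (h : A v = c • v) :
    NormedSpace.exp A v = NormedSpace.exp c • v := by
  letI : NormedRing (M2 →L[ℂ] M2) := @ContinuousLinearMap.toNormedRing ℂ M2 _ _ _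
  letI : NormedAlgebra ℂ (M2 →L[ℂ] M2) := @ContinuousLinearMap.toNormedAlgebra ℂ M2 _ _ _
  have hpow : ∀ n : ℕ, (A ^ n) v = c ^ n • v := by
    intro n
    induction n with
    | zero => simp
    | succ n ih =>
      rw [pow_succ, pow_succ]
      simp [ContinuousLinearMap.mul_apply, ih, h, smul_smul, mul_comm]
  rw [NormedSpace.exp_eq_tsum (𝕂 := ℂ), NormedSpace.exp_eq_tsum (𝕂 := ℂ)]
  have this1 := (ContinuousLinearMap.apply ℂ M2 v).map_tsum
    (@NormedSpace.expSeries_summable' ℂ (M2 →L[ℂ] M2) _ _ _ _ _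
      (@FiniteDimensional.complete ℂ (M2 →L[ℂ] M2) _ _ _ _ _ _ _ _ _) A)
  change _ = ∑' z : ℕ, ((z.factorial : ℂ)⁻¹ • A ^ z) v at this1
  refine Eq.trans this1 ?_
  simp only [ContinuousLinearMap.coe_smul', Pi.smul_apply, hpow, smul_smul]
  rw [← (NormedSpace.expSeries_summable' (𝕂 := ℂ) c).tsum_smul_const]
  simp [smul_smul]

theorem hadamard_dephasing_and_relaxation (γφ γ t : ℝ)
    (hγφ : 0 ≤ γφ) (hγ : 0 ≤ γ) (ht : 0 ≤ t)
    (D : M2 →L[ℂ] M2)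
    (hD : ∀ ρ : M2, D ρ = (γφ : ℂ) • (Lφ * ρ * Lφ - ρ)
        + (γ : ℂ) • (Lt * ρ * Lt.conjTranspose
            - (1 / 2 : ℂ) • (Lt.conjTranspose * Lt * ρ + ρ * (Lt.conjTranspose * Lt))))
    (fx fy fz : ℝ)
    (hfx : (fx : ℂ) = (1 / 2 : ℂ) * Matrix.trace (Xm * NormedSpace.exp (t • D) Xm))
    (hfy : (fy : ℂ) = (1 / 2 : ℂ) * Matrix.trace (Ym * NormedSpace.exp (t • D) Ym))
    (hfz : (fz : ℂ) = (1 / 2 : ℂ) * Matrix.trace (Zm * NormedSpace.exp (t • D) Zm)) :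
    fx = (1 / 2 : ℝ) * (Real.exp (-(γ / 2 + 2 * γφ) * t) + Real.exp (-γ * t)) ∧
    fz = (1 / 2 : ℝ) * (Real.exp (-(γ / 2 + 2 * γφ) * t) + Real.exp (-γ * t)) ∧
    fy = Real.exp (-(γ / 2 + 2 * γφ) * t) ∧
    (1 / 4 : ℝ) * (Real.log fx - Real.log fy - Real.log fz) = γφ * t / 2 + γ * t / 8 ∧
    (1 / 4 : ℝ) * (-Real.log fx - Real.log fy + Real.log fz) = γφ * t / 2 + γ * t / 8 ∧
    (1 / 4 : ℝ) * (-Real.log fx + Real.log fy - Real.log fz)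
      = γ * t / 4 - (1 / 2 : ℝ) * Real.log (Real.cosh (γφ * t - γ * t / 4)) := by
  have hDP : D Pm = (((-γ : ℝ)) : ℂ) • Pm := by
    rw [hD, hφP, brP]
    push_cast
    module
  have hDQ : D Qm = (((-(γ / 2 + 2 * γφ) : ℝ)) : ℂ) • Qm := by
    rw [hD, hφQ, brQ]
    push_cast
    module
  have hDY : D Ym = (((-(γ / 2 + 2 * γφ) : ℝ)) : ℂ) • Ym := by
    rw [hD, hφY, brY]
    push_cast
    module
  have key : ∀ (V : M2) (a : ℝ), D V = ((a : ℝ) : ℂ) • V →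
      NormedSpace.exp (t • D) V = ((Real.exp (a * t) : ℝ) : ℂ) • V := by
    intro V a h
    have h1 : (t • D) V = (((a * t : ℝ)) : ℂ) • V := by
      show t • (D V) = _
      rw [h, ← smul_assoc]
      congr 1
      rw [Complex.real_smul]
      push_cast
      ring
    rw [exp_apply_eigen _ _ _ h1]
    congr 1
    rw [← Complex.exp_eq_exp_ℂ, Complex.ofReal_exp]
  have eP := key Pm (-γ) hDP
  have eQ := key Qm (-(γ / 2 + 2 * γφ)) hDQ
  have eY := key Ym (-(γ / 2 + 2 * γφ)) hDY
  have eX : NormedSpace.exp (t • D) Xm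
      = (1/2 : ℂ) • (((Real.exp (-γ * t) : ℝ) : ℂ) • Pm
        + ((Real.exp (-(γ / 2 + 2 * γφ) * t) : ℝ) : ℂ) • Qm) := by
    conv_lhs => rw [hXPQ]
    rw [map_smul, map_add, eP, eQ]
  have eZ : NormedSpace.exp (t • D) Zm
      = (1/2 : ℂ) • (((Real.exp (-γ * t) : ℝ) : ℂ) • Pm
        - ((Real.exp (-(γ / 2 + 2 * γφ) * t) : ℝ) : ℂ) • Qm) := by
    conv_lhs => rw [hZPQ]
    rw [map_smul, map_sub, eP, eQ]
  have hfxv : fx = (1 / 2 : ℝ) * (Real.exp (-(γ / 2 + 2 * γφ) * t) + Real.exp (-γ * t)) := by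
    have hfx' : (fx : ℂ)
        = (((1 / 2 : ℝ) * (Real.exp (-(γ / 2 + 2 * γφ) * t) + Real.exp (-γ * t)) : ℝ) : ℂ) := by
      rw [hfx, eX]
      simp only [Matrix.mul_smul, Matrix.mul_add, Matrix.trace_smul, Matrix.trace_add,
        trXP, trXQ, smul_eq_mul]
      push_cast
      ring
    exact_mod_cast hfx'
  have hfzv : fz = (1 / 2 : ℝ) * (Real.exp (-(γ / 2 + 2 * γφ) * t) + Real.exp (-γ * t)) := by
    have hfz' : (fz : ℂ)
        = (((1 / 2 : ℝ) * (Real.exp (-(γ / 2 + 2 * γφ) * t) + Real.exp (-γ * t)) : ℝ) : ℂ) := by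
      rw [hfz, eZ]
      simp only [Matrix.mul_smul, Matrix.mul_sub, Matrix.trace_smul, Matrix.trace_sub,
        trZP, trZQ, smul_eq_mul]
      push_cast
      ring
    exact_mod_cast hfz'
  have hfyv : fy = Real.exp (-(γ / 2 + 2 * γφ) * t) := by
    have hfy' : (fy : ℂ) = ((Real.exp (-(γ / 2 + 2 * γφ) * t) : ℝ) : ℂ) := by
      rw [hfy, eY]
      simp only [Matrix.mul_smul, Matrix.trace_smul, trYY, smul_eq_mul]
      push_cast
      ring
    exact_mod_cast hfy'
  subst hfxv hfzv hfyv
  refine ⟨rfl, rfl, rfl, ?_, ?_, ?_⟩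
  · rw [Real.log_exp]
    ring
  · rw [Real.log_exp]
    ring
  · have hkey : (1 / 2 : ℝ) * (Real.exp (-(γ / 2 + 2 * γφ) * t) + Real.exp (-γ * t))
        = Real.exp (-(γ / 2 + 2 * γφ) * t / 2 + (-γ * t) / 2)
          * Real.cosh (γφ * t - γ * t / 4) := by
      have e1 : Real.exp (-(γ / 2 + 2 * γφ) * t)
          = Real.exp (-(γ / 2 + 2 * γφ) * t / 2 + (-γ * t) / 2)
            * Real.exp (-(γφ * t - γ * t / 4)) := by
        rw [← Real.exp_add]; congr 1; ring
      have e2 : Real.exp (-γ * t)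
          = Real.exp (-(γ / 2 + 2 * γφ) * t / 2 + (-γ * t) / 2)
            * Real.exp (γφ * t - γ * t / 4) := by
        rw [← Real.exp_add]; congr 1; ring
      rw [Real.cosh_eq, e1, e2]
      ring
    rw [hkey, Real.log_mul (Real.exp_pos _).ne' (Real.cosh_pos _).ne', Real.log_exp,
      Real.log_exp]
    ring
end
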